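/- Let R be a commutative ring, n ≥ 1, m ≥ 1, and let x_1,…,x_n, y_1,…,y_m be elements of R. Let N = m + n and let M be the N×N matrix whose entry in row r (1 ≤ r ≤ N) and column c is x_c^{N−r} if 1 ≤ c ≤ n, and (−y_{c−n})^{r−1} if n+1 ≤ c ≤ N. Then det M = (−1)^{m(m+n−1)} · ∏_{1≤i<j≤n} (x_i − x_j) · ∏_{1≤i<j≤m} (y_i − y_j) · ∏_{i=1}^n ∏_{j=1}^m (1 + x_i y_j). -/

import Mathlib

open Finset

section aux
variable {R : Type*} [CommRing R]



private lemma ite_prod {k : ℕ} (f : Fin k → Fin k → R) :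
    (∏ i : Fin k, ∏ j : Fin k, if i < j then f i j else 1)
      = ∏ i : Fin k, ∏ j ∈ Finset.Ioi i, f i j := by
  refine Finset.prod_congr rfl fun i _ => ?_
  rw [← Finset.prod_filter]
  congr 1
  ext j
  simp

private lemma pairs_prod {k : ℕ} (f : Fin k → Fin k → R) :
    ∏ p ∈ Finset.univ.filter (fun p : Fin k × Fin k => p.1 < p.2), f p.1 p.2
      = ∏ i : Fin k, ∏ j ∈ Finset.Ioi i, f i j := by
  rw [Finset.prod_filter, ← ite_prod f]
  exact Fintype.prod_prod_type _

private lemma prod_Ioi_mul {k : ℕ} (g : Fin k → R) :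
    ∏ i : Fin k, ∏ j ∈ Finset.Ioi i, (g i * g j) = ∏ i : Fin k, g i ^ (k - 1) := by
  have h1 : ∀ i : Fin k, ∏ j ∈ Finset.Ioi i, (g i * g j)
      = g i ^ (k - 1 - (i : ℕ)) * ∏ j ∈ Finset.Ioi i, g j := by
    intro i
    rw [Finset.prod_mul_distrib, Finset.prod_const, Fin.card_Ioi]
  rw [Finset.prod_congr rfl fun i _ => h1 i, Finset.prod_mul_distrib]
  have h2 : (∏ i : Fin k, ∏ j ∈ Finset.Ioi i, g j) = ∏ j : Fin k, g j ^ (j : ℕ) := by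
    rw [Finset.prod_comm' (s' := fun j => Finset.Iio j) (t' := Finset.univ) (fun x y => by simp)]
    exact Finset.prod_congr rfl fun j _ => by
      rw [Finset.prod_const, Fin.card_Iio]
  rw [h2, ← Finset.prod_mul_distrib]
  refine Finset.prod_congr rfl fun i _ => ?_
  rw [← pow_add]
  congr 1
  have := i.isLt
  omega



private lemma ite_prod' {k : ℕ} (f : Fin k → Fin k → R) :
    (∏ i : Fin k, ∏ j : Fin k, if i < j then f i j else 1)
      = ∏ i : Fin k, ∏ j ∈ Finset.Ioi i, f i j := by
  refine Finset.prod_congr rfl fun i _ => ?_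
  rw [← Finset.prod_filter]
  congr 1
  ext j
  simp

private lemma prod_pairs_block {n m : ℕ} (a : Fin n → R) (b : Fin m → R) (F : R → R → R)
    (w : Fin (m + n) → R)
    (hw : ∀ c : Fin (m + n), w c = if h : (c : ℕ) < n then a ⟨c, h⟩
      else b ⟨(c : ℕ) - n, Nat.sub_lt_left_of_lt_add (Nat.le_of_not_lt h) (Nat.add_comm m n ▸ c.isLt)⟩) :
    ∏ p ∈ Finset.univ.filter (fun p : Fin (m + n) × Fin (m + n) => p.1 < p.2),
        F (w p.1) (w p.2)
      = (∏ i : Fin n, ∏ j ∈ Finset.Ioi i, F (a i) (a j)) *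
        (∏ i : Fin m, ∏ j ∈ Finset.Ioi i, F (b i) (b j)) *
        ∏ i : Fin n, ∏ j : Fin m, F (a i) (b j) := by
  classical
  set e : Fin n ⊕ Fin m ≃ Fin (m + n) := finSumFinEquiv.trans (finCongr (Nat.add_comm n m))
    with he
  have hvl : ∀ i : Fin n, ((e (Sum.inl i)) : ℕ) = (i : ℕ) := by
    intro i; simp [he]
  have hvr : ∀ j : Fin m, ((e (Sum.inr j)) : ℕ) = n + (j : ℕ) := by
    intro j; simp [he]; omega
  have hwl : ∀ i : Fin n, w (e (Sum.inl i)) = a i := by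
    intro i
    rw [hw]
    rw [dif_pos (by rw [hvl]; exact i.isLt)]
    exact congrArg a (Fin.ext (hvl i))
  have hwr : ∀ j : Fin m, w (e (Sum.inr j)) = b j := by
    intro j
    rw [hw]
    rw [dif_neg (by rw [hvr]; omega)]
    refine congrArg b (Fin.ext ?_)
    simp [hvr j]
  have hll : ∀ i i' : Fin n, (e (Sum.inl i) < e (Sum.inl i')) ↔ i < i' := by
    intro i i'; rw [Fin.lt_def, Fin.lt_def, hvl, hvl]
  have hlr : ∀ (i : Fin n) (j : Fin m), e (Sum.inl i) < e (Sum.inr j) := by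
    intro i j; rw [Fin.lt_def, hvl, hvr]; have := i.isLt; omega
  have hrl : ∀ (j : Fin m) (i : Fin n), ¬ e (Sum.inr j) < e (Sum.inl i) := by
    intro j i; rw [Fin.lt_def, hvl, hvr]; have := i.isLt; omega
  have hrr : ∀ j j' : Fin m, (e (Sum.inr j) < e (Sum.inr j')) ↔ j < j' := by
    intro j j'; simp only [Fin.lt_def, hvr]; omega
  rw [Finset.prod_filter]
  rw [← Equiv.prod_comp (e.prodCongr e)
    (fun p : Fin (m+n) × Fin (m+n) => if p.1 < p.2 then F (w p.1) (w p.2) else 1)]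
  have : ∀ q : (Fin n ⊕ Fin m) × (Fin n ⊕ Fin m),
      (if (e.prodCongr e q).1 < (e.prodCongr e q).2 then
        F (w (e.prodCongr e q).1) (w (e.prodCongr e q).2) else 1)
      = if e q.1 < e q.2 then F (w (e q.1)) (w (e q.2)) else 1 := by
    intro q; rfl
  rw [Finset.prod_congr rfl fun q _ => this q]
  rw [Fintype.prod_prod_type
    (f := fun q : (Fin n ⊕ Fin m) × (Fin n ⊕ Fin m) =>
      if e q.1 < e q.2 then F (w (e q.1)) (w (e q.2)) else 1)]
  simp only [Fintype.prod_sum_type, Finset.prod_mul_distrib]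
  have e1 : (∏ i : Fin n, ∏ i' : Fin n,
      if e (Sum.inl i) < e (Sum.inl i') then F (w (e (Sum.inl i))) (w (e (Sum.inl i'))) else 1)
      = ∏ i : Fin n, ∏ j ∈ Finset.Ioi i, F (a i) (a j) := by
    rw [← ite_prod']
    exact Finset.prod_congr rfl fun i _ => Finset.prod_congr rfl fun i' _ => by
      rw [hwl, hwl]; exact if_congr (hll i i') rfl rfl
  have e2 : (∏ i : Fin n, ∏ j : Fin m,
      if e (Sum.inl i) < e (Sum.inr j) then F (w (e (Sum.inl i))) (w (e (Sum.inr j))) else 1)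
      = ∏ i : Fin n, ∏ j : Fin m, F (a i) (b j) := by
    exact Finset.prod_congr rfl fun i _ => Finset.prod_congr rfl fun j _ => by
      rw [hwl, hwr, if_pos (hlr i j)]
  have e3 : (∏ j : Fin m, ∏ i : Fin n,
      if e (Sum.inr j) < e (Sum.inl i) then F (w (e (Sum.inr j))) (w (e (Sum.inl i))) else 1)
      = 1 := by
    refine Finset.prod_eq_one fun j _ => Finset.prod_eq_one fun i _ => ?_
    rw [if_neg (hrl j i)]
  have e4 : (∏ j : Fin m, ∏ j' : Fin m,
      if e (Sum.inr j) < e (Sum.inr j') then F (w (e (Sum.inr j))) (w (e (Sum.inr j'))) else 1)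
      = ∏ i : Fin m, ∏ j ∈ Finset.Ioi i, F (b i) (b j) := by
    rw [← ite_prod']
    exact Finset.prod_congr rfl fun j _ => Finset.prod_congr rfl fun j' _ => by
      rw [hwr, hwr]; exact if_congr (hrr j j') rfl rfl
  rw [e1, e2, e3, e4]
  ring
end aux

open Matrix in
private lemma key_field {F : Type*} [Field F] (n m : ℕ) (hn : 1 ≤ n) (hm : 1 ≤ m)
    (x : Fin n → F) (y : Fin m → F) (hy : ∀ j, y j ≠ 0) :
    (Matrix.of fun r c : Fin (m + n) =>
      if h : (c : ℕ) < n then x ⟨c, h⟩ ^ (m + n - 1 - (r : ℕ))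
      else (-y ⟨(c : ℕ) - n, Nat.sub_lt_left_of_lt_add (Nat.le_of_not_lt h) (Nat.add_comm m n ▸ c.isLt)⟩) ^ (r : ℕ)).det
    = (-1 : F) ^ (m * (m + n - 1)) *
      (∏ i : Fin n, ∏ j ∈ Finset.Ioi i, (x i - x j)) *
      (∏ i : Fin m, ∏ j ∈ Finset.Ioi i, (y i - y j)) *
      ∏ i : Fin n, ∏ j : Fin m, (1 + x i * y j) := by
  classical
  set b : Fin m → F := fun j => -(y j)⁻¹ with hb
  set w : Fin (m + n) → F := fun c =>
    if h : (c : ℕ) < n then x ⟨c, h⟩ else b ⟨(c : ℕ) - n, Nat.sub_lt_left_of_lt_add (Nat.le_of_not_lt h) (Nat.add_comm m n ▸ c.isLt)⟩ with hwdef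
  set d : Fin (m + n) → F := fun c =>
    if h : (c : ℕ) < n then 1 else (-y ⟨(c : ℕ) - n, Nat.sub_lt_left_of_lt_add (Nat.le_of_not_lt h) (Nat.add_comm m n ▸ c.isLt)⟩) ^ (m + n - 1)
    with hd
  -- Step 1 : factor the matrix
  have hM : (Matrix.of fun r c : Fin (m + n) =>
      if h : (c : ℕ) < n then x ⟨c, h⟩ ^ (m + n - 1 - (r : ℕ))
      else (-y ⟨(c : ℕ) - n, Nat.sub_lt_left_of_lt_add (Nat.le_of_not_lt h) (Nat.add_comm m n ▸ c.isLt)⟩) ^ (r : ℕ))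
      = (Matrix.of fun r c : Fin (m + n) => w c ^ (m + n - 1 - (r : ℕ)))
        * Matrix.diagonal d := by
    ext r c
    rw [Matrix.mul_diagonal]
    by_cases h : (c : ℕ) < n
    · simp [hwdef, hd, h]
    · simp only [Matrix.of_apply, hwdef, hd, dif_neg h, if_neg h]
      set j : Fin m := ⟨(c : ℕ) - n, Nat.sub_lt_left_of_lt_add (Nat.le_of_not_lt h) (Nat.add_comm m n ▸ c.isLt)⟩
      have hyj : (-y j) ≠ 0 := neg_ne_zero.mpr (hy j)
      have hbj : b j = (-y j)⁻¹ := by rw [hb]; exact (inv_neg (a := y j)).symm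
      have hsplit : (-y j) ^ (m + n - 1)
          = (-y j) ^ (m + n - 1 - (r : ℕ)) * (-y j) ^ (r : ℕ) := by
        rw [← pow_add]
        congr 1
        have := r.isLt; omega
      rw [hbj, hsplit, ← mul_assoc, ← mul_pow, inv_mul_cancel₀ hyj, one_pow, one_mul]
  -- Step 2 : determinant of the generalized Vandermonde factor
  have hA : (Matrix.of fun r c : Fin (m + n) => w c ^ (m + n - 1 - (r : ℕ))).det
      = ∏ p ∈ Finset.univ.filter (fun p : Fin (m + n) × Fin (m + n) => p.1 < p.2),
          (w p.1 - w p.2) := by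
    have h1 : (Matrix.of fun r c : Fin (m + n) => w c ^ (m + n - 1 - (r : ℕ)))
        = ((Matrix.vandermonde (w ∘ Fin.rev)).submatrix Fin.revPerm Fin.revPerm)ᵀ := by
      ext r c
      simp only [Matrix.of_apply, Matrix.transpose_apply, Matrix.submatrix_apply,
        Matrix.vandermonde_apply, Function.comp_apply, Fin.revPerm_apply, Fin.rev_rev]
      congr 1
      rw [Fin.val_rev]
      omega
    rw [h1, Matrix.det_transpose, Matrix.det_submatrix_equiv_self, Matrix.det_vandermonde,
      ← pairs_prod]
    refine Finset.prod_nbij' (fun p => (Fin.rev p.2, Fin.rev p.1))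
      (fun p => (Fin.rev p.2, Fin.rev p.1)) ?_ ?_ ?_ ?_ ?_
    · intro p hp
      simp only [Finset.mem_filter, Finset.mem_univ, true_and] at hp ⊢
      exact Fin.rev_lt_rev.mpr hp
    · intro p hp
      simp only [Finset.mem_filter, Finset.mem_univ, true_and] at hp ⊢
      exact Fin.rev_lt_rev.mpr hp
    · intro p _; simp [Fin.rev_rev]
    · intro p _; simp [Fin.rev_rev]
    · intro p _; simp [Function.comp]
  rw [hM, Matrix.det_mul, hA, Matrix.det_diagonal]
  -- Step 3 : compute the diagonal product
  set e : Fin n ⊕ Fin m ≃ Fin (m + n) := finSumFinEquiv.trans (finCongr (Nat.add_comm n m))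
    with he
  have hvl : ∀ i : Fin n, ((e (Sum.inl i)) : ℕ) = (i : ℕ) := by intro i; simp [he]
  have hvr : ∀ j : Fin m, ((e (Sum.inr j)) : ℕ) = n + (j : ℕ) := by intro j; simp [he]; omega
  have hdiag : (∏ c : Fin (m + n), d c) = ∏ j : Fin m, (-y j) ^ (m + n - 1) := by
    rw [← Equiv.prod_comp e d, Fintype.prod_sum_type]
    have h1 : ∀ i : Fin n, d (e (Sum.inl i)) = 1 := by
      intro i
      simp only [hd]
      exact dif_pos (by rw [hvl]; exact i.isLt)
    have h2 : ∀ j : Fin m, d (e (Sum.inr j)) = (-y j) ^ (m + n - 1) := by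
      intro j
      simp only [hd]
      rw [dif_neg (by rw [hvr]; omega)]
      congr 2
      refine congrArg y (Fin.ext ?_)
      simp [hvr j]
    rw [Finset.prod_congr rfl fun i _ => h1 i, Finset.prod_congr rfl fun j _ => h2 j]
    simp
  rw [hdiag]
  -- Step 4 : split the pair product into blocks
  rw [prod_pairs_block x b (fun u v => u - v) w (fun c => rfl)]
  -- Step 5 : algebra
  set P := ∏ i : Fin n, ∏ j ∈ Finset.Ioi i, (x i - x j) with hP
  set Q := ∏ i : Fin m, ∏ j ∈ Finset.Ioi i, (y i - y j) with hQ
  set C := ∏ i : Fin n, ∏ j : Fin m, (1 + x i * y j) with hC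
  set Z := ∏ j : Fin m, y j ^ (m - 1) with hZ
  have hZne : Z ≠ 0 := Finset.prod_ne_zero_iff.mpr fun j _ => pow_ne_zero _ (hy j)
  have hY : (∏ i : Fin m, ∏ j ∈ Finset.Ioi i, (b i - b j)) = Q * Z⁻¹ := by
    have h1 : ∀ i j : Fin m, b i - b j = (y i - y j) * (y i * y j)⁻¹ := by
      intro i j
      simp only [hb]
      rw [mul_inv, sub_mul,
        show y i * ((y i)⁻¹ * (y j)⁻¹) = y i * (y i)⁻¹ * (y j)⁻¹ from by ring,
        show y j * ((y i)⁻¹ * (y j)⁻¹) = y j * (y j)⁻¹ * (y i)⁻¹ from by ring,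
        mul_inv_cancel₀ (hy i), mul_inv_cancel₀ (hy j), one_mul, one_mul]
      ring
    calc (∏ i : Fin m, ∏ j ∈ Finset.Ioi i, (b i - b j))
        = ∏ i : Fin m, ∏ j ∈ Finset.Ioi i, ((y i - y j) * (y i * y j)⁻¹) :=
          Finset.prod_congr rfl fun i _ => Finset.prod_congr rfl fun j _ => h1 i j
      _ = Q * (∏ i : Fin m, ∏ j ∈ Finset.Ioi i, (y i * y j))⁻¹ := by
          simp only [Finset.prod_mul_distrib, Finset.prod_inv_distrib]
          rfl
      _ = Q * Z⁻¹ := by rw [prod_Ioi_mul, hZ]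
  have hD : (∏ j : Fin m, (-y j) ^ (m + n - 1)) = Z * ∏ j : Fin m, (-y j) ^ n := by
    have h1 : ∀ j : Fin m, (-y j) ^ (m + n - 1) = (-y j) ^ (m - 1) * (-y j) ^ n := by
      intro j
      rw [← pow_add]
      congr 1
      omega
    rw [Finset.prod_congr rfl fun j _ => h1 j, Finset.prod_mul_distrib]
    congr 1
    have h2 : ∀ j : Fin m, (-y j) ^ (m - 1) = (-1 : F) ^ (m - 1) * y j ^ (m - 1) := by
      intro j; rw [neg_pow]
    rw [Finset.prod_congr rfl fun j _ => h2 j, Finset.prod_mul_distrib, Finset.prod_const,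
      Finset.card_univ, Fintype.card_fin, ← pow_mul, hZ]
    have hev : Even ((m - 1) * m) := by
      have h := Nat.even_mul_succ_self (m - 1)
      rwa [Nat.sub_add_cancel hm] at h
    rw [hev.neg_one_pow, one_mul]
  have hMix : (∏ i : Fin n, ∏ j : Fin m, (x i - b j)) * (∏ j : Fin m, (-y j) ^ n)
      = (-1 : F) ^ (m * n) * C := by
    have h0 : (∏ j : Fin m, (-y j) ^ n) = ∏ i : Fin n, ∏ j : Fin m, (-y j) := by
      rw [Finset.prod_comm]
      refine Finset.prod_congr rfl fun j _ => ?_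
      rw [Finset.prod_const, Finset.card_univ, Fintype.card_fin]
    rw [h0, ← Finset.prod_mul_distrib]
    have h1 : ∀ i : Fin n, (∏ j : Fin m, (x i - b j)) * (∏ j : Fin m, (-y j))
        = ∏ j : Fin m, (-(1 + x i * y j)) := by
      intro i
      rw [← Finset.prod_mul_distrib]
      refine Finset.prod_congr rfl fun j _ => ?_
      simp only [hb]
      rw [show (x i - -(y j)⁻¹) * -y j = -(x i * y j) - (y j)⁻¹ * y j from by ring,
        inv_mul_cancel₀ (hy j)]
      ring
    rw [Finset.prod_congr rfl fun i _ => h1 i]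
    have h2 : ∀ i : Fin n, (∏ j : Fin m, (-(1 + x i * y j)))
        = (-1 : F) ^ m * ∏ j : Fin m, (1 + x i * y j) := by
      intro i
      rw [show (∏ j : Fin m, (-(1 + x i * y j)))
            = ∏ j : Fin m, ((-1 : F) * (1 + x i * y j)) from
          Finset.prod_congr rfl fun j _ => by ring,
        Finset.prod_mul_distrib, Finset.prod_const, Finset.card_univ, Fintype.card_fin]
    rw [Finset.prod_congr rfl fun i _ => h2 i, Finset.prod_mul_distrib, Finset.prod_const,
      Finset.card_univ, Fintype.card_fin, ← pow_mul, ← hC]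
  have hsign : (-1 : F) ^ (m * (m + n - 1)) = (-1 : F) ^ (m * n) := by
    have h1 : m * (m + n - 1) = m * (m - 1) + m * n := by
      have : m + n - 1 = (m - 1) + n := by omega
      rw [this, Nat.mul_add]
    have hev : Even (m * (m - 1)) := by
      have h := Nat.even_mul_succ_self (m - 1)
      rw [Nat.sub_add_cancel hm] at h
      rwa [Nat.mul_comm]
    rw [h1, pow_add, hev.neg_one_pow, one_mul]
  rw [hY, hD, hsign]
  calc P * (Q * Z⁻¹) * (∏ i : Fin n, ∏ j : Fin m, (x i - b j)) * (Z * ∏ j : Fin m, (-y j) ^ n)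
      = (Z⁻¹ * Z) * (P * Q *
          ((∏ i : Fin n, ∏ j : Fin m, (x i - b j)) * ∏ j : Fin m, (-y j) ^ n)) := by ring
    _ = P * Q * ((-1 : F) ^ (m * n) * C) := by rw [inv_mul_cancel₀ hZne, one_mul, hMix]
    _ = (-1 : F) ^ (m * n) * P * Q * C := by ring

private lemma map_lhs {R S : Type*} [CommRing R] [CommRing S] (f : R →+* S)
    (n m : ℕ) (x : Fin n → R) (y : Fin m → R) :
    f ((Matrix.of fun r c : Fin (m + n) =>
      if h : (c : ℕ) < n then x ⟨c, h⟩ ^ (m + n - 1 - (r : ℕ))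
      else (-y ⟨(c : ℕ) - n, Nat.sub_lt_left_of_lt_add (Nat.le_of_not_lt h) (Nat.add_comm m n ▸ c.isLt)⟩) ^ (r : ℕ)).det)
    = (Matrix.of fun r c : Fin (m + n) =>
      if h : (c : ℕ) < n then (f (x ⟨c, h⟩)) ^ (m + n - 1 - (r : ℕ))
      else (-(f (y ⟨(c : ℕ) - n, Nat.sub_lt_left_of_lt_add (Nat.le_of_not_lt h) (Nat.add_comm m n ▸ c.isLt)⟩))) ^ (r : ℕ)).det := by
  rw [RingHom.map_det]
  congr 1
  ext r c
  by_cases h : (c : ℕ) < n <;>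
    simp [h, RingHom.mapMatrix_apply, Matrix.map_apply, map_pow, map_neg]

private lemma map_rhs {R S : Type*} [CommRing R] [CommRing S] (f : R →+* S)
    (n m : ℕ) (x : Fin n → R) (y : Fin m → R) :
    f ((-1 : R) ^ (m * (m + n - 1)) *
      (∏ i : Fin n, ∏ j ∈ Finset.Ioi i, (x i - x j)) *
      (∏ i : Fin m, ∏ j ∈ Finset.Ioi i, (y i - y j)) *
      ∏ i : Fin n, ∏ j : Fin m, (1 + x i * y j))
    = (-1 : S) ^ (m * (m + n - 1)) *
      (∏ i : Fin n, ∏ j ∈ Finset.Ioi i, (f (x i) - f (x j))) *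
      (∏ i : Fin m, ∏ j ∈ Finset.Ioi i, (f (y i) - f (y j))) *
      ∏ i : Fin n, ∏ j : Fin m, (1 + f (x i) * f (y j)) := by
  simp [map_mul, map_pow, map_prod, map_sub, map_add, map_one, map_neg]


/-- For a commutative ring `R`, `n, m ≥ 1`, `x : Fin n → R`,
`y : Fin m → R`, and `N = m + n`, let `M` be the `N × N` matrix whose entry in
(0-indexed) row `r` and column `c` is `x_c ^ (N - 1 - r)` for `c < n`, and
`(-y_{c-n}) ^ r` for `n ≤ c < N`. Then
`det M = (-1)^{m(m+n-1)} ∏_{i<j}(x_i - x_j) ∏_{i<j}(y_i - y_j) ∏_{i,j}(1 + x_i y_j)`. -/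
theorem mixed_vandermonde_det {R : Type*} [CommRing R] (n m : ℕ) (hn : 1 ≤ n)
    (hm : 1 ≤ m) (x : Fin n → R) (y : Fin m → R) :
    (Matrix.of fun r c : Fin (m + n) =>
      if h : (c : ℕ) < n then x ⟨c, h⟩ ^ (m + n - 1 - (r : ℕ))
      else (-y ⟨(c : ℕ) - n, by have := c.isLt; omega⟩) ^ (r : ℕ)).det
    = (-1 : R) ^ (m * (m + n - 1)) *
      (∏ i : Fin n, ∏ j ∈ Finset.Ioi i, (x i - x j)) *
      (∏ i : Fin m, ∏ j ∈ Finset.Ioi i, (y i - y j)) *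
      ∏ i : Fin n, ∏ j : Fin m, (1 + x i * y j) := by
  classical
  set S := MvPolynomial (Fin n ⊕ Fin m) ℤ with hS
  set K := FractionRing S with hK
  set X : Fin n → S := fun i => MvPolynomial.X (Sum.inl i) with hX
  set Y : Fin m → S := fun j => MvPolynomial.X (Sum.inr j) with hYdef
  set g : S →+* K := algebraMap S K with hg
  have hginj : Function.Injective g := IsFractionRing.injective S K
  have hy0 : ∀ j : Fin m, g (Y j) ≠ 0 := by
    intro j
    rw [Ne, map_eq_zero_iff g hginj]
    exact MvPolynomial.X_ne_zero _
  have hKeq := key_field n m hn hm (fun i => g (X i)) (fun j => g (Y j)) hy0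
  have hSeq : (Matrix.of fun r c : Fin (m + n) =>
      if h : (c : ℕ) < n then X ⟨c, h⟩ ^ (m + n - 1 - (r : ℕ))
      else (-Y ⟨(c : ℕ) - n, by have := c.isLt; omega⟩) ^ (r : ℕ)).det
      = (-1 : S) ^ (m * (m + n - 1)) *
        (∏ i : Fin n, ∏ j ∈ Finset.Ioi i, (X i - X j)) *
        (∏ i : Fin m, ∏ j ∈ Finset.Ioi i, (Y i - Y j)) *
        ∏ i : Fin n, ∏ j : Fin m, (1 + X i * Y j) := by
    apply hginj
    rw [map_lhs g n m X Y, map_rhs g n m X Y]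
    exact hKeq
  set φ : S →+* R := ((MvPolynomial.aeval (Sum.elim x y) : S →ₐ[ℤ] R) : S →+* R) with hφ
  have hφX : ∀ i : Fin n, φ (X i) = x i := by
    intro i; exact MvPolynomial.aeval_X _ _
  have hφY : ∀ j : Fin m, φ (Y j) = y j := by
    intro j; exact MvPolynomial.aeval_X _ _
  have := congrArg φ hSeq
  rw [map_lhs φ n m X Y, map_rhs φ n m X Y] at this
  simp only [hφX, hφY] at this
  exact this
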